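/- Let m ≥ 2 and let Λ_m = {0} ∪ {n ∈ ℕ : n ≥ m} be the nontrivial ordinary numerical semigroup of multiplicity m. Then: (i) the right generators μ of Λ_m for which Λ_m∖{μ} has at least one new generator are exactly m and m+1; (ii) the new generators of Λ_m∖{m} are exactly 2m and 2m+1; (iii) the unique new generator of Λ_m∖{m+1} is 2m+1. -/
import Mathlib


/-- A numerical semigroup: a cofinite submonoid of ℕ, viewed as a set of naturals. -/
def IsNumericalSemigroup (S : Set ℕ) : Prop :=
  0 ∈ S ∧ (∀ a ∈ S, ∀ b ∈ S, a + b ∈ S) ∧ ∃ N : ℕ, ∀ n : ℕ, N ≤ n → n ∈ S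

/-- The conductor: the smallest `N` such that every `n ≥ N` belongs to `S`. -/
noncomputable def sgConductor (S : Set ℕ) : ℕ :=
  sInf {N : ℕ | ∀ n : ℕ, N ≤ n → n ∈ S}

/-- The genus: the number of gaps. -/
noncomputable def sgGenus (S : Set ℕ) : ℕ :=
  Sᶜ.ncard

/-- The rank `k(Λ) = c(Λ) - g(Λ)`. -/
noncomputable def sgRank (S : Set ℕ) : ℕ :=
  sgConductor S - sgGenus S

/-- The multiplicity: the smallest nonzero element. -/
noncomputable def sgMultiplicity (S : Set ℕ) : ℕ :=
  sInf {n : ℕ | n ∈ S ∧ n ≠ 0}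

/-- The Frobenius number: the largest gap, i.e. the conductor minus one. -/
noncomputable def sgFrobenius (S : Set ℕ) : ℕ :=
  sgConductor S - 1

/-- `sgElem S j` is the element `λ_j` of `S = {λ_0 = 0 < λ_1 < λ_2 < ⋯}`. -/
noncomputable def sgElem (S : Set ℕ) (j : ℕ) : ℕ :=
  Nat.nth (· ∈ S) j

/-- The jump `u_j = λ_{j+1} - λ_j`. -/
noncomputable def sgJump (S : Set ℕ) (j : ℕ) : ℕ :=
  sgElem S (j + 1) - sgElem S j

/-- The left elements: elements of `S` smaller than the Frobenius number. -/
def sgLeftElements (S : Set ℕ) : Set ℕ :=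
  {x : ℕ | x ∈ S ∧ x + 1 < sgConductor S}

/-- A minimal generator: a nonzero element not the sum of two nonzero elements. -/
def IsMinimalGenerator (S : Set ℕ) (x : ℕ) : Prop :=
  x ∈ S ∧ x ≠ 0 ∧ ¬ ∃ a ∈ S, ∃ b ∈ S, a ≠ 0 ∧ b ≠ 0 ∧ a + b = x

/-- A right generator: a minimal generator larger than the Frobenius number. -/
def IsRightGenerator (S : Set ℕ) (x : ℕ) : Prop :=
  IsMinimalGenerator S x ∧ sgFrobenius S < x

/-- A strong generator: a right generator `μ` such that `μ + m(Λ)` is a minimal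
generator of `Λ ∖ {μ}`. -/
noncomputable def IsStrongGenerator (S : Set ℕ) (x : ℕ) : Prop :=
  IsRightGenerator S x ∧ IsMinimalGenerator (S \ {x}) (x + sgMultiplicity S)

/-- A new generator of `Λ`: a minimal generator of `Λ` that is not a minimal
generator of `Λ ∪ {F(Λ)}`. -/
noncomputable def IsNewGenerator (S : Set ℕ) (x : ℕ) : Prop :=
  IsMinimalGenerator S x ∧ ¬ IsMinimalGenerator (S ∪ {sgFrobenius S}) x

/-- `x` (an element `λ_s ≥ c(Λ)`) is an order-`p` seed of `Λ` if
`x + λ_p ≠ λ_i + λ_j` for all `p < i ≤ j < s`, i.e. for all `i ≤ j` with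
`p < i` and `λ_j < x`. -/
noncomputable def IsSeed (S : Set ℕ) (p x : ℕ) : Prop :=
  sgConductor S ≤ x ∧ ∀ i j : ℕ, p < i → i ≤ j → sgElem S j < x →
    x + sgElem S p ≠ sgElem S i + sgElem S j

/-- `T` is a child of `S`: obtained by removing one right generator. -/
def IsChild (T S : Set ℕ) : Prop :=
  ∃ μ : ℕ, IsRightGenerator S μ ∧ T = S \ {μ}

/-- A grandchild: a child of a child. -/
def IsGrandchild (T S : Set ℕ) : Prop :=
  ∃ C : Set ℕ, IsChild C S ∧ IsChild T C

/-- A great-grandchild: a child of a grandchild. -/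
def IsGreatGrandchild (T S : Set ℕ) : Prop :=
  ∃ C : Set ℕ, IsGrandchild C S ∧ IsChild T C

/-- `⟨a,b,c,…⟩|_κ`: the smallest numerical semigroup containing a given set. -/
def sgClosure (A : Set ℕ) : Set ℕ :=
  ⋂₀ {S : Set ℕ | IsNumericalSemigroup S ∧ A ⊆ S}


private lemma conductor_eq {T : Set ℕ} {c : ℕ} (hc : 1 ≤ c)
    (h1 : ∀ n, c ≤ n → n ∈ T) (h2 : c - 1 ∉ T) : sgConductor T = c := by
  unfold sgConductor
  apply le_antisymm
  · exact Nat.sInf_le h1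
  · refine le_csInf ⟨c, ?_⟩ ?_
    · exact h1
    intro N hN
    by_contra h
    push_neg at h
    exact h2 (hN (c - 1) (by omega))


theorem statement15 (m : ℕ) (hm : 2 ≤ m)
    (S : Set ℕ) (hSdef : S = ({0} : Set ℕ) ∪ {n : ℕ | m ≤ n}) :
    (∀ μ : ℕ, (IsRightGenerator S μ ∧ ∃ x : ℕ, IsNewGenerator (S \ {μ}) x) ↔
      (μ = m ∨ μ = m + 1)) ∧
    (∀ x : ℕ, IsNewGenerator (S \ {m}) x ↔ (x = 2 * m ∨ x = 2 * m + 1)) ∧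
    (∀ x : ℕ, IsNewGenerator (S \ {m + 1}) x ↔ x = 2 * m + 1) := by
  have memS : ∀ x : ℕ, x ∈ S ↔ x = 0 ∨ m ≤ x := by
    intro x
    simp [hSdef, Set.mem_union, Set.mem_setOf_eq]
  have memD : ∀ μ x : ℕ, x ∈ S \ {μ} ↔ (x = 0 ∨ m ≤ x) ∧ x ≠ μ := by
    intro μ x
    rw [Set.mem_diff, memS, Set.mem_singleton_iff]
  -- conductor of S
  have hcS : sgConductor S = m :=
    conductor_eq (by omega) (fun n hn => (memS n).mpr (Or.inr hn))
      (by rw [memS]; omega)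
  have hfS : sgFrobenius S = m - 1 := by rw [sgFrobenius, hcS]
  -- conductor of S \ {μ} for μ ≥ m
  have hcD : ∀ μ : ℕ, m ≤ μ → sgConductor (S \ {μ}) = μ + 1 := by
    intro μ hμ
    refine conductor_eq (by omega) (fun n hn => (memD μ n).mpr ⟨Or.inr (by omega), by omega⟩) ?_
    rw [memD]; omega
  have hfD : ∀ μ : ℕ, m ≤ μ → sgFrobenius (S \ {μ}) = μ := by
    intro μ hμ; rw [sgFrobenius, hcD μ hμ]; omega
  have hun : ∀ μ : ℕ, m ≤ μ → (S \ {μ}) ∪ {μ} = S := by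
    intro μ hμ
    rw [Set.diff_union_self]
    exact Set.union_eq_self_of_subset_right
      (Set.singleton_subset_iff.mpr ((memS μ).mpr (Or.inr hμ)))
  -- minimal generators of S
  have genS : ∀ x : ℕ, IsMinimalGenerator S x ↔ m ≤ x ∧ x < 2 * m := by
    intro x
    unfold IsMinimalGenerator
    constructor
    · rintro ⟨hx, hx0, hns⟩
      rw [memS] at hx
      refine ⟨by omega, ?_⟩
      by_contra h
      exact hns ⟨m, (memS m).mpr (Or.inr le_rfl), x - m,
        (memS _).mpr (Or.inr (by omega)), by omega, by omega, by omega⟩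
    · rintro ⟨h1, h2⟩
      refine ⟨(memS x).mpr (Or.inr h1), by omega, ?_⟩
      rintro ⟨a, ha, b, hb, ha0, hb0, hab⟩
      rw [memS] at ha hb
      omega
  -- minimal generators of S \ {m}
  have gen1 : ∀ x : ℕ, IsMinimalGenerator (S \ {m}) x ↔ m + 1 ≤ x ∧ x < 2 * m + 2 := by
    intro x
    unfold IsMinimalGenerator
    constructor
    · rintro ⟨hx, hx0, hns⟩
      rw [memD] at hx
      refine ⟨by omega, ?_⟩
      by_contra h
      exact hns ⟨m + 1, (memD m (m + 1)).mpr ⟨Or.inr (by omega), by omega⟩, x - (m + 1),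
        (memD m _).mpr ⟨Or.inr (by omega), by omega⟩, by omega, by omega, by omega⟩
    · rintro ⟨h1, h2⟩
      refine ⟨(memD m x).mpr ⟨Or.inr (by omega), by omega⟩, by omega, ?_⟩
      rintro ⟨a, ha, b, hb, ha0, hb0, hab⟩
      rw [memD] at ha hb
      omega
  -- minimal generators of S \ {m+1}
  have gen2 : ∀ x : ℕ, IsMinimalGenerator (S \ {m + 1}) x ↔
      (x = m ∨ m + 2 ≤ x) ∧ x ≠ 2 * m ∧ x ≤ 2 * m + 1 := by
    intro x
    unfold IsMinimalGenerator
    constructor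
    · rintro ⟨hx, hx0, hns⟩
      rw [memD] at hx
      refine ⟨by omega, ?_, ?_⟩
      · intro h
        exact hns ⟨m, (memD _ m).mpr ⟨Or.inr le_rfl, by omega⟩, m,
          (memD _ m).mpr ⟨Or.inr le_rfl, by omega⟩, by omega, by omega, by omega⟩
      · by_contra h
        exact hns ⟨m, (memD _ m).mpr ⟨Or.inr le_rfl, by omega⟩, x - m,
          (memD _ _).mpr ⟨Or.inr (by omega), by omega⟩, by omega, by omega, by omega⟩
    · rintro ⟨h1, h2, h3⟩
      refine ⟨(memD _ x).mpr ⟨Or.inr (by omega), by omega⟩, by omega, ?_⟩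
      rintro ⟨a, ha, b, hb, ha0, hb0, hab⟩
      rw [memD] at ha hb
      omega
  -- minimal generators of S \ {μ} for μ ≥ m+2
  have genM : ∀ μ x : ℕ, m + 2 ≤ μ →
      (IsMinimalGenerator (S \ {μ}) x ↔ m ≤ x ∧ x < 2 * m ∧ x ≠ μ) := by
    intro μ x hμ
    unfold IsMinimalGenerator
    constructor
    · rintro ⟨hx, hx0, hns⟩
      rw [memD] at hx
      refine ⟨by omega, ?_, by omega⟩
      by_contra h
      by_cases hxm : x - m = μ
      · exact hns ⟨m + 1, (memD _ _).mpr ⟨Or.inr (by omega), by omega⟩, x - (m + 1),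
          (memD _ _).mpr ⟨Or.inr (by omega), by omega⟩, by omega, by omega, by omega⟩
      · exact hns ⟨m, (memD _ m).mpr ⟨Or.inr le_rfl, by omega⟩, x - m,
          (memD _ _).mpr ⟨Or.inr (by omega), hxm⟩, by omega, by omega, by omega⟩
    · rintro ⟨h1, h2, h3⟩
      refine ⟨(memD _ x).mpr ⟨Or.inr h1, h3⟩, by omega, ?_⟩
      rintro ⟨a, ha, b, hb, ha0, hb0, hab⟩
      rw [memD] at ha hb
      omega
  -- new generators of S \ {m}
  have new1 : ∀ x : ℕ, IsNewGenerator (S \ {m}) x ↔ (x = 2 * m ∨ x = 2 * m + 1) := by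
    intro x
    unfold IsNewGenerator
    rw [hfD m le_rfl, hun m le_rfl, gen1, genS]
    omega
  -- new generators of S \ {m+1}
  have new2 : ∀ x : ℕ, IsNewGenerator (S \ {m + 1}) x ↔ x = 2 * m + 1 := by
    intro x
    unfold IsNewGenerator
    rw [hfD (m + 1) (by omega), hun (m + 1) (by omega), gen2, genS]
    omega
  refine ⟨?_, new1, new2⟩
  intro μ
  constructor
  · rintro ⟨⟨hgen, -⟩, x, hnew⟩
    rw [genS] at hgen
    by_contra h
    push_neg at h
    have hμ2 : m + 2 ≤ μ := by omega
    unfold IsNewGenerator at hnew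
    rw [hfD μ (by omega), hun μ (by omega), genM μ x hμ2, genS] at hnew
    omega
  · intro h
    have hfrob : sgFrobenius S < μ := by rw [hfS]; omega
    rcases h with h | h
    · refine ⟨⟨(genS μ).mpr ⟨by omega, by omega⟩, hfrob⟩, 2 * m + 1, ?_⟩
      rw [h]
      exact (new1 _).mpr (Or.inr rfl)
    · refine ⟨⟨(genS μ).mpr ⟨by omega, by omega⟩, hfrob⟩, 2 * m + 1, ?_⟩
      rw [h]
      exact (new2 _).mpr rfl
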